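/- arXiv:1811.02821 — 8 statements merged into one kernel-verified Lean document; each statement's English description precedes it below -/
import Mathlib

section
/- Let N ≥ 1 and let U ∈ M_N(ℂ) be defined by U_{ij} = δ_{ij} - (1/(N-1))(1 ± 1/√N) for i,j ∈ {1,…,N-1}, and U_{iN} = U_{Nj} = U_{NN} = ±1/√N (with a fixed sign choice). Then U is orthogonal, i.e., U Uᵗ = Uᵗ U = 1. -/
/-- The matrix `U_{(N,±)}` with entries
`U_{ij} = δ_{ij} - (1/(N-1))(1 ± 1/√N)` for `i,j ∈ {1,…,N-1}` and
`U_{iN} = U_{Nj} = U_{NN} = ±1/√N` is orthogonal. -/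
theorem stmt0 (N : ℕ) (hN : 2 ≤ N) (ε : ℝ) (hε : ε = 1 ∨ ε = -1)
    (U : Matrix (Fin N) (Fin N) ℂ)
    (hU : ∀ i j : Fin N,
      U i j = if (i : ℕ) < N - 1 ∧ (j : ℕ) < N - 1 then
        ((((if i = j then (1 : ℝ) else 0) -
            (1 / ((N : ℝ) - 1)) * (1 + ε / Real.sqrt N)) : ℝ) : ℂ)
      else ((ε / Real.sqrt N : ℝ) : ℂ)) :
    U * U.transpose = 1 ∧ U.transpose * U = 1 := by
  obtain ⟨M, rfl⟩ : ∃ M, N = M + 1 := ⟨N - 1, by omega⟩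
  have hM1 : 1 ≤ M := by omega
  simp only [Nat.add_sub_cancel] at hU
  have hsym : U.transpose = U := by
    ext i j
    rw [Matrix.transpose_apply, hU j i, hU i j]
    by_cases h : (i:ℕ) < M ∧ (j:ℕ) < M
    · rw [if_pos h, if_pos ⟨h.2, h.1⟩]
      by_cases hij : i = j
      · simp [hij]
      · rw [if_neg hij, if_neg (fun h' => hij h'.symm)]
    · rw [if_neg (fun h' => h ⟨h'.2, h'.1⟩), if_neg h]
  suffices hmain : U * U = 1 by
    exact ⟨by rw [hsym]; exact hmain, by rw [hsym]; exact hmain⟩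
  -- scalar setup
  obtain ⟨s, hs⟩ : ∃ s : ℂ, s = ((ε / Real.sqrt ((M+1:ℕ)) : ℝ) : ℂ) := ⟨_, rfl⟩
  obtain ⟨a, ha⟩ : ∃ a : ℂ, a = ((1/(((M+1:ℕ):ℝ) - 1) * (1 + ε/Real.sqrt ((M+1:ℕ)):ℝ)) : ℂ) := ⟨_, rfl⟩
  have hU' : ∀ i j : Fin (M+1), U i j =
      if (i:ℕ) < M ∧ (j:ℕ) < M then (if i = j then (1:ℂ) else 0) - a else s := by
    intro i j
    rw [hU i j]
    by_cases h : (i:ℕ) < M ∧ (j:ℕ) < M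
    · rw [if_pos h, if_pos h, ha]
      push_cast [apply_ite Complex.ofReal]
      ring
    · rw [if_neg h, if_neg h, hs]
  have hsqrt : Real.sqrt ((M+1:ℕ)) ≠ 0 := by positivity
  have hMne : ((M:ℂ)) ≠ 0 := by
    exact_mod_cast Nat.cast_ne_zero.2 (by omega)
  have hM1ne : ((M:ℂ)+1) ≠ 0 := by
    have : ((M:ℝ)+1) ≠ 0 := by positivity
    exact_mod_cast this
  have hs2 : ((M:ℂ)+1) * (s * s) = 1 := by
    rw [hs, ← Complex.ofReal_mul]
    have hε2 : ε * ε = 1 := by rcases hε with rfl | rfl <;> norm_num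
    have h1 : (ε / Real.sqrt ((M+1:ℕ))) * (ε / Real.sqrt ((M+1:ℕ))) = 1 / ((M:ℝ)+1) := by
      rw [div_mul_div_comm, hε2, Real.mul_self_sqrt (by positivity)]
      push_cast
      ring
    rw [h1]
    push_cast
    field_simp
  have haM : (M:ℂ) * a = 1 + s := by
    rw [ha, hs]
    have hsc : ((Real.sqrt ((M+1:ℕ)) : ℝ) : ℂ) ≠ 0 := Complex.ofReal_ne_zero.2 hsqrt
    push_cast
    field_simp
    rw [add_sub_cancel_right, mul_div_cancel_left₀ _ hMne]
  ext i k
  rw [Matrix.mul_apply, Matrix.one_apply]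
  simp only [hU']
  rw [Fin.sum_univ_castSucc]
  simp only [Fin.coe_castSucc, Fin.is_lt, Fin.val_last, lt_irrefl, and_true, and_false,
    false_and, if_false]
  by_cases hi : (i:ℕ) < M <;> by_cases hk : (k:ℕ) < M
  · simp only [hi, hk, if_true, and_self, true_and]
    have hii : i = Fin.castSucc ⟨(i:ℕ), hi⟩ := rfl
    have hkk : k = Fin.castSucc ⟨(k:ℕ), hk⟩ := rfl
    rw [hii, hkk]
    set i' : Fin M := ⟨(i:ℕ), hi⟩
    set k' : Fin M := ⟨(k:ℕ), hk⟩
    simp only [Fin.castSucc_inj]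
    have expand : ∀ j : Fin M,
        ((if i' = j then (1:ℂ) else 0) - a) * ((if j = k' then (1:ℂ) else 0) - a) =
        (if i' = j then (1:ℂ) else 0) * (if j = k' then 1 else 0) -
          a * (if i' = j then 1 else 0) - a * (if j = k' then 1 else 0) + a * a := by
      intro j; ring
    rw [Finset.sum_congr rfl (fun j _ => expand j)]
    simp only [Finset.sum_add_distrib, Finset.sum_sub_distrib, ← Finset.mul_sum,
      Finset.sum_ite_eq, Finset.sum_ite_eq', Finset.mem_univ, if_true,
      Finset.sum_const, Finset.card_univ, Fintype.card_fin, nsmul_eq_mul,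
      mul_ite, mul_one, mul_zero, ite_mul, zero_mul, one_mul]
    have key : -(2*a) + (M:ℂ)*(a*a) + s*s = 0 := by
      have h0 : (M:ℂ) * (-(2*a) + (M:ℂ)*(a*a) + s*s) = 0 := by
        linear_combination ((M:ℂ)*a + s - 1) * haM + hs2
      rcases mul_eq_zero.mp h0 with h | h
      · exact absurd h hMne
      · exact h
    by_cases hik : i' = k'
    · simp only [hik, if_true, if_pos rfl]
      linear_combination key
    · simp only [if_neg hik]
      linear_combination key
  · simp only [hi, hk, if_true, if_false, true_and, and_false]
    have hik : ¬ i = k := fun h => hk (h ▸ hi)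
    simp only [hik, if_false]
    have hii : i = Fin.castSucc ⟨(i:ℕ), hi⟩ := rfl
    rw [hii]
    set i' : Fin M := ⟨(i:ℕ), hi⟩
    simp only [Fin.castSucc_inj, sub_mul, Finset.sum_sub_distrib,
      Finset.sum_ite_eq, Finset.sum_ite_eq', Finset.mem_univ, if_true,
      Finset.sum_const, Finset.card_univ, Fintype.card_fin, nsmul_eq_mul,
      ite_mul, one_mul, zero_mul]
    linear_combination (-s) * haM
  · simp only [hi, hk, if_true, if_false, true_and, and_true, false_and]
    have hik : ¬ i = k := fun h => hi (h ▸ hk)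
    simp only [hik, if_false]
    have hkk : k = Fin.castSucc ⟨(k:ℕ), hk⟩ := rfl
    rw [hkk]
    set k' : Fin M := ⟨(k:ℕ), hk⟩
    simp only [Fin.castSucc_inj, mul_sub, Finset.sum_sub_distrib,
      Finset.sum_ite_eq, Finset.sum_ite_eq', Finset.mem_univ, if_true,
      Finset.sum_const, Finset.card_univ, Fintype.card_fin, nsmul_eq_mul,
      mul_ite, mul_one, mul_zero]
    linear_combination (-s) * haM
  · simp only [hi, hk, if_false, false_and, and_false]
    have hik : i = k := Fin.ext (by omega)
    simp only [hik, if_pos rfl, if_true]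
    simp only [Finset.sum_const, Finset.card_univ, Fintype.card_fin, nsmul_eq_mul]
    linear_combination hs2
end

section
/- Let σ be a permutation of {1,…,N} fixing N, let A ∈ M_N(ℂ) be its permutation matrix A_{ij} = δ_{i,σ(j)}, and let V = V_{(N,±)} be the (N-1)×N matrix with V_{ij} = a δ_{ij} + b + c δ_{Nj} for suitable constants (the first N-1 rows of U_{(N,±)}). Then V A V* is the (N-1)×(N-1) permutation matrix of the restriction of σ to {1,…,N-1}, i.e., (V A V*)_{ij} = δ_{i,σ(j)} for i,j ≤ N-1. -/
/-- For a permutation `σ` of `{1,…,N}` fixing the last index, with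
permutation matrix `A_{ij} = δ_{i,σ(j)}` and `V = V_{(N,±)}` the first `N-1`
rows of `U_{(N,±)}`, the matrix `V A V*` is the permutation matrix of the
restriction of `σ` to the first `N-1` indices. -/
theorem stmt5 (N : ℕ) (hN : 2 ≤ N) (ε : ℝ) (hε : ε = 1 ∨ ε = -1)
    (σ : Equiv.Perm (Fin N)) (hσ : σ ⟨N - 1, by omega⟩ = ⟨N - 1, by omega⟩)
    (A : Matrix (Fin N) (Fin N) ℂ)
    (hA : ∀ i j : Fin N, A i j = if i = σ j then 1 else 0)
    (V : Matrix (Fin (N - 1)) (Fin N) ℂ)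
    (hV : ∀ (i : Fin (N - 1)) (j : Fin N), V i j =
      if (j : ℕ) < N - 1 then
        ((((if (i : ℕ) = (j : ℕ) then (1 : ℝ) else 0) -
            (1 / ((N : ℝ) - 1)) * (1 + ε / Real.sqrt N)) : ℝ) : ℂ)
      else ((ε / Real.sqrt N : ℝ) : ℂ)) :
    ∀ i j : Fin (N - 1), (V * A * V.conjTranspose) i j =
      if Fin.castLE (Nat.sub_le N 1) i = σ (Fin.castLE (Nat.sub_le N 1) j) then 1 else 0 := by
  classical
  intro i j
  set L : Fin N := ⟨N - 1, by omega⟩ with hLdef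
  have hσ' : σ L = L := hσ
  have hNpos : (0:ℝ) < N := by exact_mod_cast (by omega : 0 < N)
  set d : ℝ := ε / Real.sqrt N with hd
  have hNC : (N:ℂ) ≠ 0 := by exact_mod_cast (by omega : N ≠ 0)
  have hN1C : (N:ℂ) - 1 ≠ 0 := by
    have : (N:ℂ) ≠ 1 := by exact_mod_cast (by omega : N ≠ 1)
    exact sub_ne_zero.mpr this
  have hd2 : ((d:ℂ))^2 * N = 1 := by
    have hs : Real.sqrt N ^ 2 = N := Real.sq_sqrt hNpos.le
    have hε2 : ε^2 = 1 := by rcases hε with h|h <;> simp [h]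
    have h1 : d^2 = 1 / N := by rw [hd, div_pow, hε2, hs]
    have h2 : ((d:ℂ))^2 = 1 / N := by
      rw [← Complex.ofReal_pow, h1]; push_cast; ring
    rw [h2]; field_simp
  set c : ℂ := (1 + (d:ℂ)) / ((N:ℂ) - 1) with hc
  have hL : ∀ p : Fin (N-1), Fin.castLE (Nat.sub_le N 1) p ≠ L := by
    intro p h
    have h1 := congrArg Fin.val h
    have h2 := p.isLt
    simp [hLdef] at h1
    omega
  have hσL : ∀ l : Fin N, σ l = L ↔ l = L := by
    intro l
    constructor
    · intro h; exact σ.injective (h.trans hσ'.symm)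
    · intro h; rw [h, hσ']
  -- uniform description of V
  have hV' : ∀ (p : Fin (N-1)) (l : Fin N),
      V p l = ((if Fin.castLE (Nat.sub_le N 1) p = l then (1:ℂ) else 0) - c)
        + (c + (d:ℂ)) * (if L = l then 1 else 0) := by
    intro p l
    rw [hV]
    by_cases hl : (l:ℕ) < N - 1
    · have h3 : L ≠ l := by
        intro h; have := congrArg Fin.val h; simp [hLdef] at this; omega
      rw [if_pos hl, if_neg h3, mul_zero, add_zero]
      have hcond : (Fin.castLE (Nat.sub_le N 1) p = l) ↔ ((p:ℕ) = (l:ℕ)) := by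
        rw [Fin.ext_iff]; simp
      by_cases hpl : (p:ℕ) = (l:ℕ)
      · rw [if_pos hpl, if_pos (hcond.mpr hpl)]
        push_cast
        rw [hc]; field_simp
      · rw [if_neg hpl, if_neg (fun h => hpl (hcond.mp h))]
        push_cast
        rw [hc]; field_simp
    · have hlL : l = L := by
        apply Fin.ext
        have := l.isLt
        simp [hLdef]; omega
      rw [if_neg hl, hlL, if_pos rfl, if_neg (hL p), mul_one]
      ring
  have hstar : ∀ (p : Fin (N-1)) (l : Fin N), star (V p l) = V p l := by
    intro p l
    rw [hV]
    split <;> exact Complex.conj_ofReal _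
  have hmul : (V * A * V.conjTranspose) i j = ∑ l, V i (σ l) * V j l := by
    rw [Matrix.mul_apply]
    refine Finset.sum_congr rfl (fun l _ => ?_)
    rw [Matrix.conjTranspose_apply, hstar, Matrix.mul_apply]
    have h1 : (∑ k, V i k * A k l) = V i (σ l) := by
      simp only [hA, mul_ite, mul_one, mul_zero]
      rw [Finset.sum_ite_eq']
      simp
    rw [h1]
  have hterm : ∀ l : Fin N, V i (σ l) * V j l =
      ((if Fin.castLE (Nat.sub_le N 1) j = l then (if Fin.castLE (Nat.sub_le N 1) i = σ l then (1:ℂ) else 0) - c else 0)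
      + (if Equiv.symm σ (Fin.castLE (Nat.sub_le N 1) i) = l then -c else 0)
      + (if L = l then (c+(d:ℂ))*(c+(d:ℂ)) - 2*c*(c+(d:ℂ)) else 0))
      + c * c := by
    intro l
    rw [hV' i (σ l), hV' j l]
    have e1 : (L = σ l) = (L = l) := by
      apply propext
      rw [eq_comm, hσL l, eq_comm]
    have e2 : (Equiv.symm σ (Fin.castLE (Nat.sub_le N 1) i) = l) = (Fin.castLE (Nat.sub_le N 1) i = σ l) := by
      apply propext
      exact Equiv.symm_apply_eq σ
    simp only [e1, e2]
    by_cases h3 : L = l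
    · have h1 : Fin.castLE (Nat.sub_le N 1) j ≠ l := fun h => hL j (h.trans h3.symm)
      have h2 : Fin.castLE (Nat.sub_le N 1) i ≠ σ l := by
        intro h
        apply hL i
        rw [h, ← h3, hσ']
      simp only [if_neg h1, if_neg h2, if_pos h3]
      ring
    · by_cases h1 : Fin.castLE (Nat.sub_le N 1) j = l <;>
        by_cases h2 : Fin.castLE (Nat.sub_le N 1) i = σ l <;>
        simp only [h1, h2, h3, if_true, if_false, ite_true, ite_false,
          if_pos, if_neg, not_false_iff] <;> ring
  have hconst : -c + -c + ((c+(d:ℂ))*(c+(d:ℂ)) - 2*c*(c+(d:ℂ))) + (N:ℂ)*(c*c) = 0 := by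
    rw [hc]
    field_simp
    linear_combination ((N:ℂ) - 1) * hd2
  rw [hmul]
  simp only [hterm]
  rw [Finset.sum_add_distrib, Finset.sum_add_distrib, Finset.sum_add_distrib,
    Finset.sum_ite_eq, Finset.sum_ite_eq, Finset.sum_ite_eq]
  simp only [Finset.mem_univ, if_true, Finset.sum_const, Finset.card_univ,
    Fintype.card_fin, nsmul_eq_mul]
  linear_combination hconst
end

section
/- Define on ℂ^{N} the vectors V_{js} for the matrix V = V_{(N,±)}. For all j₁,…,j_l ∈ {1,…,N-1}: ∑_{s=1}^{N} V_{j₁ s} ⋯ V_{j_l s} = ∑_{i=0}^{l} (−(1/(N-1))(1 ± 1/√N))^i δ_{b_{l,i}}(j) + (±1/√N)^l, where δ_{b_{l,i}}(j) = ∑_{|I|=i} δ_{b_{l,I}}(j) for i < l and δ_{b_{l,l}}(j) := N-1. -/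
/-- For the rows `V_{js}` of `V = V_{(N,±)}` and any indices
`j₁,…,j_l ∈ {1,…,N-1}`:
`∑_{s=1}^{N} V_{j₁s} ⋯ V_{j_l s} = ∑_{i=0}^{l} (−(1/(N-1))(1±1/√N))^i δ_{b_{l,i}}(j) + (±1/√N)^l`,
where `δ_{b_{l,i}}(j) = ∑_{|I|=i} δ_{b_{l,I}}(j)` for `i < l` and `δ_{b_{l,l}}(j) := N-1`. -/
theorem stmt8 (N l : ℕ) (hN : 2 ≤ N) (ε : ℝ) (hε : ε = 1 ∨ ε = -1)
    (V : Fin (N - 1) → Fin N → ℝ)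
    (hV : ∀ (p : Fin (N - 1)) (s : Fin N), V p s =
      if (s : ℕ) < N - 1 then
        (if (p : ℕ) = (s : ℕ) then 1 else 0) - (1 / ((N : ℝ) - 1)) * (1 + ε / Real.sqrt N)
      else ε / Real.sqrt N)
    (j : Fin l → Fin (N - 1)) :
    (∑ s : Fin N, ∏ α : Fin l, V (j α) s) =
      (∑ i ∈ Finset.range (l + 1),
        (-(1 / ((N : ℝ) - 1)) * (1 + ε / Real.sqrt N)) ^ i *
          (if i = l then (N : ℝ) - 1
           else ∑ I ∈ Finset.powersetCard i (Finset.univ : Finset (Fin l)),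
             (if ∀ α ∉ I, ∀ β ∉ I, j α = j β then (1 : ℝ) else 0)))
      + (ε / Real.sqrt N) ^ l := by
  classical
  obtain ⟨n, rfl⟩ : ∃ n, N = n + 1 := ⟨N - 1, by omega⟩
  have hn1 : 1 ≤ n := by omega
  set C : ℝ := -(1 / (((n + 1 : ℕ) : ℝ) - 1)) * (1 + ε / Real.sqrt ((n + 1 : ℕ) : ℝ)) with hC
  set g : Finset (Fin l) → ℝ := fun I =>
    if I = Finset.univ then ((n + 1 : ℕ) : ℝ) - 1
    else (if ∀ α ∉ I, ∀ β ∉ I, j α = j β then (1 : ℝ) else 0) with hg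
  -- RHS as a sum over the powerset
  have hRHS : (∑ i ∈ Finset.range (l + 1),
      C ^ i *
        (if i = l then ((n + 1 : ℕ) : ℝ) - 1
         else ∑ I ∈ Finset.powersetCard i (Finset.univ : Finset (Fin l)),
           (if ∀ α ∉ I, ∀ β ∉ I, j α = j β then (1 : ℝ) else 0)))
      = ∑ I ∈ (Finset.univ : Finset (Fin l)).powerset, C ^ I.card * g I := by
    have hcardu : (Finset.univ : Finset (Fin l)).card = l := by simp
    rw [Finset.sum_powerset, hcardu]
    refine Finset.sum_congr rfl fun i hi => ?_
    have : ∀ I ∈ Finset.powersetCard i (Finset.univ : Finset (Fin l)),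
        C ^ I.card * g I = C ^ i * g I := by
      intro I hI
      rw [(Finset.mem_powersetCard.mp hI).2]
    rw [Finset.sum_congr rfl this, ← Finset.mul_sum]
    congr 1
    by_cases hil : i = l
    · have hps := Finset.powersetCard_self (Finset.univ : Finset (Fin l))
      rw [hcardu] at hps
      rw [if_pos hil, hil, hps, Finset.sum_singleton, hg]
      simp
    · rw [if_neg hil]
      refine Finset.sum_congr rfl fun I hI => ?_
      have hIne : I ≠ Finset.univ := by
        intro h
        apply hil
        have := (Finset.mem_powersetCard.mp hI).2
        rw [h, hcardu] at this
        omega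
      rw [hg]
      simp [hIne]
  rw [hRHS]
  -- last coordinate
  rw [Fin.sum_univ_castSucc]
  have hlast : (∏ α : Fin l, V (j α) (Fin.last n)) = (ε / Real.sqrt ((n + 1 : ℕ) : ℝ)) ^ l := by
    have : ∀ α : Fin l, V (j α) (Fin.last n) = ε / Real.sqrt ((n + 1 : ℕ) : ℝ) := by
      intro α
      rw [hV]
      simp
    rw [Finset.prod_congr rfl (fun α _ => this α), Finset.prod_const]
    simp
  rw [hlast]
  congr 1
  -- main part
  have hcast : ∀ (p : Fin (n + 1 - 1)) (s : Fin n),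
      V p (Fin.castSucc s) = (if (p : ℕ) = (s : ℕ) then (1 : ℝ) else 0) + C := by
    intro p s
    rw [hV]
    have hs : ((Fin.castSucc s : Fin (n + 1)) : ℕ) < n + 1 - 1 := by
      simp [Fin.coe_castSucc]
    rw [if_pos hs, hC, sub_eq_add_neg, ← neg_mul]
    simp [Fin.coe_castSucc]
  calc
    (∑ s : Fin n, ∏ α : Fin l, V (j α) (Fin.castSucc s))
        = ∑ s : Fin n, ∑ t ∈ (Finset.univ : Finset (Fin l)).powerset,
            (∏ α ∈ t, if ((j α : ℕ) = (s : ℕ)) then (1 : ℝ) else 0) *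
              C ^ (Finset.univ \ t).card := by
        refine Finset.sum_congr rfl fun s _ => ?_
        rw [Finset.prod_congr rfl (fun α _ => hcast (j α) s), Finset.prod_add]
        refine Finset.sum_congr rfl fun t ht => ?_
        rw [Finset.prod_const]
    _ = ∑ t ∈ (Finset.univ : Finset (Fin l)).powerset,
          (∑ s : Fin n, ∏ α ∈ t, if ((j α : ℕ) = (s : ℕ)) then (1 : ℝ) else 0) *
            C ^ (Finset.univ \ t).card := by
        rw [Finset.sum_comm]
        exact Finset.sum_congr rfl fun t _ => (Finset.sum_mul _ _ _).symm
    _ = ∑ I ∈ (Finset.univ : Finset (Fin l)).powerset, C ^ I.card * g I := by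
        refine Finset.sum_nbij' (fun t => Finset.univ \ t) (fun I => Finset.univ \ I)
          ?_ ?_ ?_ ?_ ?_
        · intro t _; simp
        · intro I _; simp
        · intro t _; exact Finset.sdiff_sdiff_eq_self (Finset.subset_univ t)
        · intro I _; exact Finset.sdiff_sdiff_eq_self (Finset.subset_univ I)
        · intro t _
          rw [mul_comm]
          congr 1
          have hmem : ∀ α : Fin l, α ∉ Finset.univ \ t ↔ α ∈ t := by
            intro α; simp
          by_cases ht0 : t = ∅
          · subst ht0
            rw [hg]
            simp only [Finset.sdiff_empty, if_pos rfl]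
            simp
          · obtain ⟨α₀, hα₀⟩ := Finset.nonempty_of_ne_empty ht0
            have hIne : Finset.univ \ t ≠ Finset.univ := by
              intro h
              have : α₀ ∈ Finset.univ \ t := by rw [h]; exact Finset.mem_univ α₀
              exact (Finset.mem_sdiff.mp this).2 hα₀
            rw [hg]
            simp only [if_neg hIne]
            simp only [Finset.prod_boole]
            by_cases hc : ∀ α ∉ Finset.univ \ t, ∀ β ∉ Finset.univ \ t, j α = j β
            · rw [if_pos hc]
              have hcond : ∀ s : Fin n,
                  (∀ α ∈ t, ((j α : ℕ) = (s : ℕ))) ↔ (s : Fin n) = (j α₀ : Fin (n + 1 - 1)) := by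
                intro s
                constructor
                · intro h
                  exact Fin.ext (h α₀ hα₀).symm
                · intro h α hα
                  have := hc α ((hmem α).mpr hα) α₀ ((hmem α₀).mpr hα₀)
                  rw [this, h]
              have h1 := Finset.sum_ite_eq' (Finset.univ : Finset (Fin n))
                ((j α₀ : Fin (n + 1 - 1)) : Fin n) (fun _ => (1 : ℝ))
              simp only [hcond]
              exact h1.trans (if_pos (Finset.mem_univ _))
            · rw [if_neg hc]
              refine Finset.sum_eq_zero fun s _ => if_neg ?_
              intro h
              apply hc
              intro α hα β hβ
              exact Fin.ext (((h α ((hmem α).mp hα)).trans (h β ((hmem β).mp hβ)).symm))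
end

section
/- Let U = U_{(N,±)}, P the projection onto span{ξ}^⊥ (entries δ_{ij} - 1/N), and E ∈ M_N(ℂ) the diagonal projection E = diag(1,…,1,0). Then U P = E U. -/
/-- With `U = U_{(N,±)}`, `P` the projection onto `span{ξ}^⊥`
(entries `δ_{ij} - 1/N`), and `E = diag(1,…,1,0)`, one has `U P = E U`. -/
theorem stmt10 (N : ℕ) (hN : 2 ≤ N) (ε : ℝ) (hε : ε = 1 ∨ ε = -1)
    (U : Matrix (Fin N) (Fin N) ℂ)
    (hU : ∀ i j : Fin N,
      U i j = if (i : ℕ) < N - 1 ∧ (j : ℕ) < N - 1 then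
        ((((if i = j then (1 : ℝ) else 0) -
            (1 / ((N : ℝ) - 1)) * (1 + ε / Real.sqrt N)) : ℝ) : ℂ)
      else ((ε / Real.sqrt N : ℝ) : ℂ))
    (P : Matrix (Fin N) (Fin N) ℂ)
    (hP : ∀ i j : Fin N, P i j = (if i = j then 1 else 0) - 1 / (N : ℂ))
    (E : Matrix (Fin N) (Fin N) ℂ)
    (hE : ∀ i j : Fin N, E i j = if i = j ∧ (i : ℕ) < N - 1 then 1 else 0) :
    U * P = E * U := by
  obtain ⟨n, rfl⟩ : ∃ n, N = n + 1 := ⟨N - 1, by omega⟩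
  simp only [Nat.cast_add, Nat.cast_one] at hU hP
  have hn1 : 1 ≤ n := by omega
  have hn : (n : ℝ) ≠ 0 := by exact_mod_cast (Nat.pos_of_ne_zero (by omega)).ne'
  have hnC : (n : ℂ) ≠ 0 := by exact_mod_cast (Nat.cast_ne_zero (R := ℂ)).mpr (by omega)
  have hNC : ((n : ℂ) + 1) ≠ 0 := Nat.cast_add_one_ne_zero n
  have hsR : Real.sqrt ((n : ℝ) + 1) ≠ 0 := by positivity
  have hsC : ((Real.sqrt ((n : ℝ) + 1) : ℝ) : ℂ) ≠ 0 := Complex.ofReal_ne_zero.mpr hsR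
  ext i j
  rw [Matrix.mul_apply, Matrix.mul_apply]
  -- row sums of U
  have hS : ∑ k, U i k =
      if (i : ℕ) < n then 0 else ((ε / Real.sqrt ((n : ℝ) + 1) : ℝ) : ℂ) * (n + 1) := by
    rw [Fin.sum_univ_castSucc]
    by_cases hi : (i : ℕ) < n
    · have hlast : U i (Fin.last n) = ((ε / Real.sqrt ((n : ℝ) + 1) : ℝ) : ℂ) := by
        rw [hU]; simp
      rw [hlast]
      have hrow : ∀ k : Fin n, U i k.castSucc =
          (if i = k.castSucc then (1 : ℂ) else 0) -
            ((((1 : ℝ) / ((n : ℝ) + 1 - 1)) * (1 + ε / Real.sqrt ((n : ℝ) + 1)) : ℝ) : ℂ) := by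
        intro k
        rw [hU]
        have h : (i : ℕ) < n + 1 - 1 ∧ ((k.castSucc : Fin (n + 1)) : ℕ) < n + 1 - 1 := by
          simp [hi, k.isLt]
        rw [if_pos h]
        push_cast [apply_ite (fun x : ℝ => (x : ℂ))]
        ring
      rw [Finset.sum_congr rfl fun k _ => hrow k, Finset.sum_sub_distrib,
        Finset.sum_const, Finset.card_univ, Fintype.card_fin]
      have hind : (∑ k : Fin n, if i = Fin.castSucc k then (1 : ℂ) else 0) = 1 := by
        rw [Finset.sum_eq_single (⟨(i : ℕ), hi⟩ : Fin n)]
        · simp [Fin.ext_iff]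
        · intro k _ hk
          rw [if_neg]
          intro h
          exact hk (by simp [Fin.ext_iff] at h ⊢; omega)
        · simp
      rw [hind, nsmul_eq_mul]
      have hkey : ((n : ℂ)) *
          ((((1 : ℝ) / ((n : ℝ) + 1 - 1)) * (1 + ε / Real.sqrt ((n : ℝ) + 1)) : ℝ) : ℂ)
          = 1 + ((ε / Real.sqrt ((n : ℝ) + 1) : ℝ) : ℂ) := by
        push_cast
        field_simp
        linear_combination ((Real.sqrt ((n : ℝ) + 1) : ℂ) + (ε : ℂ)) * (mul_inv_cancel₀ hnC)
      rw [hkey, if_pos hi]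
      ring
    · have hall : ∀ k : Fin (n + 1), U i k = ((ε / Real.sqrt ((n : ℝ) + 1) : ℝ) : ℂ) := by
        intro k
        rw [hU, if_neg]
        intro h
        exact hi (by simpa using h.1)
      rw [Finset.sum_congr rfl fun k _ => hall k.castSucc, hall, Finset.sum_const,
        Finset.card_univ, Fintype.card_fin, if_neg hi]
      push_cast
      ring
  -- LHS entry
  have hL : ∑ k, U i k * P k j = U i j - (∑ k, U i k) / ((n : ℂ) + 1) := by
    have hterm : ∀ k, U i k * P k j =
        (if k = j then U i k else 0) - U i k / ((n : ℂ) + 1) := by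
      intro k
      rw [hP]
      split_ifs <;> push_cast <;> ring
    rw [Finset.sum_congr rfl fun k _ => hterm k, Finset.sum_sub_distrib,
      Finset.sum_ite_eq' Finset.univ j, if_pos (Finset.mem_univ j), ← Finset.sum_div]
  -- RHS entry
  have hR : ∑ k, E i k * U k j = if (i : ℕ) < n then U i j else 0 := by
    have hterm : ∀ k, E i k * U k j =
        if i = k then (if (i : ℕ) < n then (1 : ℂ) else 0) * U k j else 0 := by
      intro k
      rw [hE]
      by_cases h : i = k <;> by_cases h2 : (i : ℕ) < n <;> simp [h, h2]
    rw [Finset.sum_congr rfl fun k _ => hterm k, Finset.sum_ite_eq Finset.univ i,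
      if_pos (Finset.mem_univ i)]
    by_cases h2 : (i : ℕ) < n <;> simp [h2]
  rw [hL, hR, hS]
  by_cases hi : (i : ℕ) < n
  · simp [hi]
  · rw [if_neg hi, if_neg hi]
    have hUij : U i j = ((ε / Real.sqrt ((n : ℝ) + 1) : ℝ) : ℂ) := by
      rw [hU, if_neg]
      intro h
      exact hi (by simpa using h.1)
    rw [hUij, mul_div_assoc, div_self hNC, mul_one, sub_self]
end

section
/- For N ≥ k + l, the maps {T_p : p ∈ 𝒫(k,l)} are linearly independent in L((ℂ^N)^{⊗k}, (ℂ^N)^{⊗l}); hence the assignment p ↦ T_p restricted to 𝒫(k,l) is injective on linear combinations. -/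
open Classical in
/-- For `N ≥ k + l`, the maps `T_p` for `p ∈ 𝒫(k,l)` (partitions
of the `k + l` points, realized as setoids on `Fin k ⊕ Fin l`, with
`(T_p)_{j,i} = δ_p(i,j)`) are linearly independent; hence `p ↦ T_p` is
injective on linear combinations. -/
theorem stmt14 (N k l : ℕ) (h : k + l ≤ N) :
    LinearIndependent ℂ (fun p : Setoid (Fin k ⊕ Fin l) =>
      fun (jl : Fin l → Fin N) (ik : Fin k → Fin N) =>
        (if ∀ x y, p.r x y → Sum.elim ik jl x = Sum.elim ik jl y
         then (1 : ℂ) else 0)) := by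
  classical
  rw [linearIndependent_iff]
  intro g hg
  by_contra hne
  obtain ⟨q, hq, hqmin⟩ := g.support.exists_minimal (Finsupp.support_nonempty_iff.mpr hne)
  -- build a map f realizing q as the kernel of a function to Fin N
  have hcard : Fintype.card (Quotient q) ≤ Fintype.card (Fin N) := by
    calc Fintype.card (Quotient q) ≤ Fintype.card (Fin k ⊕ Fin l) :=
          Fintype.card_quotient_le q
      _ = k + l := by simp
      _ ≤ N := h
      _ = Fintype.card (Fin N) := (Fintype.card_fin N).symm
  obtain ⟨e⟩ := Function.Embedding.nonempty_of_card_le hcard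
  set f : Fin k ⊕ Fin l → Fin N := fun x => e (Quotient.mk q x) with hf
  have hfiff : ∀ x y, f x = f y ↔ q.r x y := by
    intro x y
    constructor
    · intro hxy
      exact Quotient.exact (e.injective hxy)
    · intro hxy
      simp only [hf]
      exact congrArg e (Quotient.sound hxy)
  set ik : Fin k → Fin N := fun i => f (Sum.inl i) with hik
  set jl : Fin l → Fin N := fun j => f (Sum.inr j) with hjl
  have helim : Sum.elim ik jl = f := by
    funext x; cases x <;> rfl
  have hg' := congrFun (congrFun hg jl) ik
  rw [Finsupp.linearCombination_apply, Finsupp.sum] at hg'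
  simp only [Finset.sum_apply, Pi.smul_apply, smul_eq_mul, Pi.zero_apply, helim] at hg'
  have hkey : ∀ p ∈ g.support,
      (g p * (if ∀ x y, p.r x y → f x = f y then (1:ℂ) else 0))
        = if p = q then g q else 0 := by
    intro p hp
    by_cases hpq : ∀ x y, p.r x y → f x = f y
    · have hle : p ≤ q := by
        rw [Setoid.le_def]
        intro x y hxy
        exact (hfiff x y).mp (hpq x y hxy)
      have : p = q := by
        by_contra hne'
        exact hne' (le_antisymm hle (hqmin hp hle))
      subst this
      rw [if_pos hpq, if_pos rfl, mul_one]
    · have : p ≠ q := by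
        intro hpq'
        apply hpq
        intro x y hxy
        exact (hfiff x y).mpr (hpq' ▸ hxy)
      rw [if_neg hpq, if_neg this, mul_zero]
  rw [Finset.sum_congr rfl hkey, Finset.sum_ite_eq' g.support q] at hg'
  simp [hq] at hg'
  exact (Finsupp.mem_support_iff.mp hq) hg'
end

section
/- For each k, l and N, the set {T_p : p ∈ 𝒫(k,l), b(p) ≤ N} is a basis of the span of {T_p : p ∈ 𝒫(k,l)}, where b(p) is the number of blocks of p. -/
namespace Stmt15Aux

open Classical

variable {k l N : ℕ}

instance inst0 : Finite (Setoid (Fin k ⊕ Fin l)) :=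
  Finite.of_injective (fun p => p.r)
    (fun _ _ h => Setoid.ext fun x y => iff_of_eq (congrFun₂ h x y))

noncomputable instance inst1 : Fintype (Setoid (Fin k ⊕ Fin l)) := Fintype.ofFinite _

/-- The map `T_p`. -/
noncomputable def T (N : ℕ) (p : Setoid (Fin k ⊕ Fin l)) :
    (Fin l → Fin N) → (Fin k → Fin N) → ℂ :=
  fun jl ik => if ∀ x y, p.r x y → Sum.elim ik jl x = Sum.elim ik jl y then 1 else 0

/-- The auxiliary map `T̂_q` (distinct blocks get distinct indices). -/
noncomputable def G (N : ℕ) (q : Setoid (Fin k ⊕ Fin l)) :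
    (Fin l → Fin N) → (Fin k → Fin N) → ℂ :=
  fun jl ik => if Setoid.ker (Sum.elim ik jl) = q then 1 else 0

lemma cond_iff (p : Setoid (Fin k ⊕ Fin l)) (f : Fin k ⊕ Fin l → Fin N) :
    (∀ x y, p.r x y → f x = f y) ↔ p ≤ Setoid.ker f := by
  rw [Setoid.le_def]
  exact ⟨fun h x y hxy => h x y hxy, fun h x y hxy => h hxy⟩

/-- `T_p = ∑_{q ≥ p} T̂_q`. -/
lemma T_eq_sum (N : ℕ) (p : Setoid (Fin k ⊕ Fin l)) :
    T N p = ∑ q ∈ Finset.univ.filter (fun q => p ≤ q), G N q := by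
  funext jl ik
  rw [Finset.sum_apply, Finset.sum_apply]
  simp only [T, G]
  rw [Finset.sum_ite_eq (Finset.univ.filter (fun q => p ≤ q)) (Setoid.ker (Sum.elim ik jl))
    (fun _ => (1 : ℂ))]
  simp only [Finset.mem_filter, Finset.mem_univ, true_and]
  rw [if_congr (cond_iff p (Sum.elim ik jl)) rfl rfl]

/-- The kernel of a map into `Fin N` has at most `N` classes. -/
lemma ker_card_le (f : Fin k ⊕ Fin l → Fin N) :
    Nat.card (Quotient (Setoid.ker f)) ≤ N := by
  calc Nat.card (Quotient (Setoid.ker f)) = Nat.card (Set.range f) :=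
        Nat.card_congr (Setoid.quotientKerEquivRange f)
    _ ≤ Nat.card (Fin N) := Nat.card_le_card_of_injective _ Subtype.val_injective
    _ = N := by simp

/-- `T̂_q = 0` when `b(q) > N`. -/
lemma G_eq_zero {q : Setoid (Fin k ⊕ Fin l)} (h : N < Nat.card (Quotient q)) :
    G N q = 0 := by
  funext jl ik
  rw [G, if_neg, Pi.zero_apply, Pi.zero_apply]
  intro hk
  exact absurd (hk ▸ ker_card_le (Sum.elim ik jl)) (by omega)

/-- If `b(q) ≤ N` then `q` is realized as the kernel of some map into `Fin N`. -/
lemma exists_witness {q : Setoid (Fin k ⊕ Fin l)} (h : Nat.card (Quotient q) ≤ N) :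
    ∃ (jl : Fin l → Fin N) (ik : Fin k → Fin N), Setoid.ker (Sum.elim ik jl) = q := by
  haveI : Fintype (Quotient q) := Fintype.ofFinite _
  obtain ⟨e⟩ : Nonempty (Quotient q ↪ Fin N) :=
    Function.Embedding.nonempty_of_card_le (by simpa [Nat.card_eq_fintype_card] using h)
  set f : Fin k ⊕ Fin l → Fin N := fun x => e (Quotient.mk q x) with hf
  refine ⟨fun j => f (Sum.inr j), fun i => f (Sum.inl i), ?_⟩
  have hfe : Sum.elim (fun i => f (Sum.inl i)) (fun j => f (Sum.inr j)) = f := by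
    funext x; cases x <;> rfl
  rw [hfe]
  refine Setoid.ext fun x y => ?_
  constructor
  · intro hxy
    exact Quotient.exact (e.injective hxy)
  · intro hxy
    exact congrArg e (Quotient.sound hxy)

lemma filter_le_eq (q : Setoid (Fin k ⊕ Fin l)) :
    Finset.univ.filter (fun r => q ≤ r) =
      insert q (Finset.univ.filter (fun r => q < r)) := by
  ext r
  simp only [Finset.mem_filter, Finset.mem_univ, true_and, Finset.mem_insert]
  constructor
  · intro h
    rcases eq_or_lt_of_le h with h' | h'
    · exact Or.inl h'.symm
    · exact Or.inr h'
  · rintro (rfl | h)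
    · exact le_refl _
    · exact le_of_lt h

/-- Every `T̂_q` lies in the span of `{T_p : b(p) ≤ N}`. -/
lemma G_mem (N : ℕ) (q : Setoid (Fin k ⊕ Fin l)) :
    G N q ∈ Submodule.span ℂ
      (Set.range (fun p : {p : Setoid (Fin k ⊕ Fin l) // Nat.card (Quotient p) ≤ N} =>
        T N p.val)) := by
  induction q using WellFoundedGT.induction with
  | _ q IH =>
    by_cases h : Nat.card (Quotient q) ≤ N
    · have key : G N q = T N q
          - ∑ r ∈ Finset.univ.filter (fun r => q < r), G N r := by
        rw [T_eq_sum, filter_le_eq, Finset.sum_insert (by simp), add_sub_cancel_right]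
      rw [key]
      refine sub_mem (Submodule.subset_span ⟨⟨q, h⟩, rfl⟩) (Submodule.sum_mem _ fun r hr => ?_)
      exact IH r (Finset.mem_filter.mp hr).2
    · rw [G_eq_zero (by omega)]
      exact Submodule.zero_mem _

end Stmt15Aux

open Classical in
/-- For each `k`, `l`, `N`, the family
`{T_p : p ∈ 𝒫(k,l), b(p) ≤ N}` (where `b(p)` is the number of blocks of `p`)
is a basis of `span{T_p : p ∈ 𝒫(k,l)}`: it is linearly independent and its
span equals the span of all the `T_p`. -/
theorem stmt15 (N k l : ℕ) :
    LinearIndependent ℂ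
      (fun p : {p : Setoid (Fin k ⊕ Fin l) // Nat.card (Quotient p) ≤ N} =>
        fun (jl : Fin l → Fin N) (ik : Fin k → Fin N) =>
          (if ∀ x y, p.val.r x y → Sum.elim ik jl x = Sum.elim ik jl y
           then (1 : ℂ) else 0)) ∧
    Submodule.span ℂ
      (Set.range (fun p : {p : Setoid (Fin k ⊕ Fin l) // Nat.card (Quotient p) ≤ N} =>
        fun (jl : Fin l → Fin N) (ik : Fin k → Fin N) =>
          (if ∀ x y, p.val.r x y → Sum.elim ik jl x = Sum.elim ik jl y
           then (1 : ℂ) else 0))) =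
    Submodule.span ℂ
      (Set.range (fun p : Setoid (Fin k ⊕ Fin l) =>
        fun (jl : Fin l → Fin N) (ik : Fin k → Fin N) =>
          (if ∀ x y, p.r x y → Sum.elim ik jl x = Sum.elim ik jl y
           then (1 : ℂ) else 0))) := by
  open Stmt15Aux in
  constructor
  · -- linear independence
    rw [show (fun p : {p : Setoid (Fin k ⊕ Fin l) // Nat.card (Quotient p) ≤ N} =>
        fun (jl : Fin l → Fin N) (ik : Fin k → Fin N) =>
          (if ∀ x y, p.val.r x y → Sum.elim ik jl x = Sum.elim ik jl y
           then (1 : ℂ) else 0)) = fun p => T N p.val from rfl]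
    haveI : Fintype {p : Setoid (Fin k ⊕ Fin l) // Nat.card (Quotient p) ≤ N} :=
      Fintype.ofFinite _
    rw [Fintype.linearIndependent_iff]
    intro g hg
    intro p
    induction p using WellFoundedLT.induction with
    | _ p IH =>
      obtain ⟨jl, ik, hker⟩ := Stmt15Aux.exists_witness p.2
      have h1 := congrFun (congrFun hg jl) ik
      simp only [Finset.sum_apply, Pi.smul_apply, smul_eq_mul, Pi.zero_apply, Stmt15Aux.T, hker,
        mul_boole] at h1
      have h2 : ∀ p' : {p : Setoid (Fin k ⊕ Fin l) // Nat.card (Quotient p) ≤ N},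
          (if ∀ x y, p'.val.r x y → Sum.elim ik jl x = Sum.elim ik jl y then g p' else 0)
          = if p' ≤ p then g p' else 0 := by
        intro p'
        congr 1
        rw [eq_iff_iff, Stmt15Aux.cond_iff, hker, ← Subtype.coe_le_coe]
      rw [Finset.sum_congr rfl (fun p' _ => h2 p')] at h1
      rw [Finset.sum_eq_single p (fun b _ hbne => ?_) (by simp)] at h1
      · simpa using h1
      · by_cases hb : b ≤ p
        · rw [if_pos hb, IH b (lt_of_le_of_ne hb hbne)]
        · rw [if_neg hb]
  · apply le_antisymm
    · apply Submodule.span_mono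
      rintro _ ⟨p, rfl⟩
      exact ⟨p.val, rfl⟩
    · rw [Submodule.span_le]
      rintro _ ⟨p, rfl⟩
      show Stmt15Aux.T N p ∈ _
      rw [Stmt15Aux.T_eq_sum]
      exact Submodule.sum_mem _ fun q _ => Stmt15Aux.G_mem N q
end

section
/- Let G act via maps: if T ∈ Mor(u^{⊗k}, u^{⊗l}) (i.e. T u^{⊗k} = u^{⊗l} T for a unitary matrix u over a C*-algebra with the projection P = V*V commuting with u), then V^{⊗l} T V*^{⊗k} intertwines v^{⊗k} and v^{⊗l} where v = V u V*; conversely every intertwiner of v^{⊗k}, v^{⊗l} is of this form. Formally: {V^{⊗l} T V*^{⊗k} : T u^{⊗k} = u^{⊗l} T} = {S : S v^{⊗k} = v^{⊗l} S}. -/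
/-- Entrywise `k`-th tensor (Kronecker) power of a square matrix over a
(possibly noncommutative) ring, with entries multiplied in order. -/
def tensorPowSq {A : Type*} [Ring A] {N : ℕ} (u : Matrix (Fin N) (Fin N) A) (k : ℕ) :
    Matrix (Fin k → Fin N) (Fin k → Fin N) A :=
  fun i j => (List.ofFn (fun a : Fin k => u (i a) (j a))).prod

/-- Entrywise `k`-th tensor (Kronecker) power of a rectangular complex matrix. -/
def tensorPowRect {m n : ℕ} (V : Matrix (Fin m) (Fin n) ℂ) (k : ℕ) :
    Matrix (Fin k → Fin m) (Fin k → Fin n) ℂ :=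
  fun i j => ∏ a : Fin k, V (i a) (j a)



/-- Rectangular entrywise tensor power over a ring. -/
def tpow {A : Type*} [Ring A] {m n : ℕ} (X : Matrix (Fin m) (Fin n) A) (k : ℕ) :
    Matrix (Fin k → Fin m) (Fin k → Fin n) A :=
  fun i j => (List.ofFn (fun a : Fin k => X (i a) (j a))).prod

section aux
variable {A : Type*} [Ring A]

lemma tpow_succ_apply {m n k : ℕ} (X : Matrix (Fin m) (Fin n) A)
    (i : Fin (k+1) → Fin m) (j : Fin (k+1) → Fin n) :
    tpow X (k+1) i j = X (i 0) (j 0) * tpow X k (i ∘ Fin.succ) (j ∘ Fin.succ) := by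
  simp [tpow, List.ofFn_succ, Function.comp]

lemma sum_pi_succ {M : Type*} [AddCommMonoid M] {n k : ℕ}
    (g : (Fin (k+1) → Fin n) → M) :
    ∑ m, g m = ∑ m0 : Fin n, ∑ m' : Fin k → Fin n, g (Fin.cons m0 m') := by
  have h := Fintype.sum_equiv (Fin.consEquiv (fun _ => Fin n))
    (fun p : Fin n × (Fin k → Fin n) => g (Fin.cons p.1 p.2)) g (fun p => rfl)
  rw [← h, Fintype.sum_prod_type]

lemma tpow_mul {m n p : ℕ} (k : ℕ) (X : Matrix (Fin m) (Fin n) A)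
    (Y : Matrix (Fin n) (Fin p) A)
    (h : ∀ i j i' j', Commute (X i j) (Y i' j')) :
    tpow (X * Y) k = tpow X k * tpow Y k := by
  induction k with
  | zero =>
    ext i j
    simp [tpow, Matrix.mul_apply]
  | succ k ih =>
    ext i j
    have hcomm : ∀ (m0 : Fin n) (j0 : Fin p) (i' : Fin k → Fin m) (m' : Fin k → Fin n),
        Commute (Y m0 j0) (tpow X k i' m') := by
      intro m0 j0 i' m'
      refine Commute.list_prod_right _ _ ?_
      intro x hx
      rw [List.mem_ofFn] at hx
      obtain ⟨a, rfl⟩ := hx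
      exact (h _ _ _ _).symm
    have hrhs : (tpow X (k+1) * tpow Y (k+1)) i j
        = ∑ m0 : Fin n, ∑ m' : Fin k → Fin n,
            (X (i 0) m0 * tpow X k (i ∘ Fin.succ) m')
              * (Y m0 (j 0) * tpow Y k m' (j ∘ Fin.succ)) := by
      rw [Matrix.mul_apply, sum_pi_succ (fun m => tpow X (k+1) i m * tpow Y (k+1) m j)]
      refine Finset.sum_congr rfl (fun m0 _ => Finset.sum_congr rfl (fun m' _ => ?_))
      have h2 : (Fin.cons m0 m' : Fin (k+1) → Fin n) ∘ Fin.succ = m' := by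
        funext a; simp
      rw [tpow_succ_apply, tpow_succ_apply, h2, Fin.cons_zero]
    rw [hrhs, tpow_succ_apply, Matrix.mul_apply, ih, Finset.sum_mul]
    refine Finset.sum_congr rfl (fun m0 _ => ?_)
    rw [Matrix.mul_apply, Finset.mul_sum]
    refine Finset.sum_congr rfl (fun m' _ => ?_)
    calc X (i 0) m0 * Y m0 (j 0) * (tpow X k (i ∘ Fin.succ) m' * tpow Y k m' (j ∘ Fin.succ))
        = X (i 0) m0 * ((Y m0 (j 0) * tpow X k (i ∘ Fin.succ) m') * tpow Y k m' (j ∘ Fin.succ)) := by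
          simp only [mul_assoc]
      _ = X (i 0) m0 * ((tpow X k (i ∘ Fin.succ) m' * Y m0 (j 0)) * tpow Y k m' (j ∘ Fin.succ)) := by
          rw [(hcomm m0 (j 0) (i ∘ Fin.succ) m').eq]
      _ = X (i 0) m0 * tpow X k (i ∘ Fin.succ) m' * (Y m0 (j 0) * tpow Y k m' (j ∘ Fin.succ)) := by
          simp only [mul_assoc]

lemma tpow_one {n : ℕ} (k : ℕ) : tpow (1 : Matrix (Fin n) (Fin n) A) k = 1 := by
  ext i j
  rcases eq_or_ne i j with rfl | h
  · simp [tpow, Matrix.one_apply]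
  · obtain ⟨a, ha⟩ := Function.ne_iff.mp h
    rw [Matrix.one_apply_ne h]
    refine List.prod_eq_zero ?_
    rw [List.mem_ofFn]
    exact ⟨a, by simp [Matrix.one_apply, ha]⟩

lemma tpow_map {B : Type*} [Ring B] (f : A →+* B) {m n : ℕ} (k : ℕ)
    (X : Matrix (Fin m) (Fin n) A) :
    (tpow X k).map f = tpow (X.map f) k := by
  ext i j
  simp [tpow, Matrix.map_apply, map_list_prod, List.map_ofFn, Function.comp_def]

end aux

lemma tensorPowRect_eq_tpow {m n : ℕ} (V : Matrix (Fin m) (Fin n) ℂ) (k : ℕ) :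
    tensorPowRect V k = tpow V k := by
  ext i j
  exact (List.prod_ofFn).symm

lemma tensorPowSq_eq_tpow {A : Type*} [Ring A] {N : ℕ} (u : Matrix (Fin N) (Fin N) A) (k : ℕ) :
    tensorPowSq u k = tpow u k := rfl

lemma tpow_mulC {m n p : ℕ} (k : ℕ) (X : Matrix (Fin m) (Fin n) ℂ)
    (Y : Matrix (Fin n) (Fin p) ℂ) : tpow (X * Y) k = tpow X k * tpow Y k :=
  tpow_mul k X Y (fun _ _ _ _ => mul_comm _ _)

lemma tpow_conjT {m n : ℕ} (k : ℕ) (X : Matrix (Fin m) (Fin n) ℂ) :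
    (tpow X k).conjTranspose = tpow X.conjTranspose k := by
  ext i j
  simp [tpow, Matrix.conjTranspose_apply, List.prod_ofFn, star_prod]

section alg
variable {A : Type*} [Ring A] [Algebra ℂ A]

lemma tpow_smul_mul {m n p : ℕ} (k : ℕ) (X : Matrix (Fin m) (Fin n) ℂ)
    (W : Matrix (Fin n) (Fin p) A) :
    tpow (X.map (algebraMap ℂ A) * W) k = (tpow X k).map (algebraMap ℂ A) * tpow W k := by
  rw [tpow_mul k (X.map (algebraMap ℂ A)) W (fun i j i' j' => Algebra.commutes (X i j) (W i' j')),
    tpow_map (algebraMap ℂ A)]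

lemma tpow_mul_smul {m n p : ℕ} (k : ℕ) (W : Matrix (Fin m) (Fin n) A)
    (X : Matrix (Fin n) (Fin p) ℂ) :
    tpow (W * X.map (algebraMap ℂ A)) k = tpow W k * (tpow X k).map (algebraMap ℂ A) := by
  rw [tpow_mul k W (X.map (algebraMap ℂ A)) (fun i j i' j' => (Algebra.commutes (X i' j') (W i j)).symm),
    tpow_map (algebraMap ℂ A)]

end alg
/-- Given a unitary `u ∈ M_N(A)` over a unital C*-algebra `A` and
a coisometry `V` with `P = V*V` commuting with `u`, setting `v = V u V*`, the
intertwiners of `v^{⊗k}, v^{⊗l}` are exactly the compressions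
`V^{⊗l} T V*^{⊗k}` of intertwiners `T` of `u^{⊗k}, u^{⊗l}`. -/
theorem stmt16 (N k l : ℕ) (hN : 2 ≤ N) (A : Type*) [CStarAlgebra A]
    (u : Matrix (Fin N) (Fin N) A)
    (hu1 : u * u.conjTranspose = 1) (hu2 : u.conjTranspose * u = 1)
    (V : Matrix (Fin (N - 1)) (Fin N) ℂ)
    (hVV : V * V.conjTranspose = 1)
    (hPu : ((V.conjTranspose * V).map (algebraMap ℂ A)) * u =
      u * ((V.conjTranspose * V).map (algebraMap ℂ A))) :
    {S : Matrix (Fin l → Fin (N - 1)) (Fin k → Fin (N - 1)) ℂ |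
      ∃ T : Matrix (Fin l → Fin N) (Fin k → Fin N) ℂ,
        (T.map (algebraMap ℂ A)) * tensorPowSq u k =
          tensorPowSq u l * (T.map (algebraMap ℂ A)) ∧
        S = tensorPowRect V l * T * (tensorPowRect V k).conjTranspose} =
    {S : Matrix (Fin l → Fin (N - 1)) (Fin k → Fin (N - 1)) ℂ |
      (S.map (algebraMap ℂ A)) *
        tensorPowSq ((V.map (algebraMap ℂ A)) * u * ((V.conjTranspose).map (algebraMap ℂ A))) k =
      tensorPowSq ((V.map (algebraMap ℂ A)) * u * ((V.conjTranspose).map (algebraMap ℂ A))) l *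
        (S.map (algebraMap ℂ A))} := by
  have FA2 : ∀ q : ℕ, (tpow (V.conjTranspose * V) q).map (algebraMap ℂ A)
      = (tpow V.conjTranspose q).map (algebraMap ℂ A) * (tpow V q).map (algebraMap ℂ A) := by
    intro q; rw [← Matrix.map_mul, ← tpow_mulC]
  have FA3 : ∀ q : ℕ, (tpow (V.conjTranspose * V) q).map (algebraMap ℂ A) * tpow u q
      = tpow u q * (tpow (V.conjTranspose * V) q).map (algebraMap ℂ A) := by
    intro q
    rw [← tpow_smul_mul, ← tpow_mul_smul, hPu]
  have FA4 : ∀ q : ℕ, (tpow V q).map (algebraMap ℂ A)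
      * (tpow (V.conjTranspose * V) q).map (algebraMap ℂ A)
      = (tpow V q).map (algebraMap ℂ A) := by
    intro q; rw [← Matrix.map_mul, ← tpow_mulC, ← Matrix.mul_assoc, hVV, Matrix.one_mul]
  have FA4' : ∀ q : ℕ, (tpow (V.conjTranspose * V) q).map (algebraMap ℂ A)
      * (tpow V.conjTranspose q).map (algebraMap ℂ A)
      = (tpow V.conjTranspose q).map (algebraMap ℂ A) := by
    intro q; rw [← Matrix.map_mul, ← tpow_mulC, Matrix.mul_assoc V.conjTranspose V V.conjTranspose, hVV, Matrix.mul_one]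
  have FA5 : ∀ q : ℕ,
      tensorPowSq ((V.map (algebraMap ℂ A)) * u * ((V.conjTranspose).map (algebraMap ℂ A))) q
      = (tpow V q).map (algebraMap ℂ A) * tpow u q
        * (tpow V.conjTranspose q).map (algebraMap ℂ A) := by
    intro q
    rw [tensorPowSq_eq_tpow, tpow_mul_smul, tpow_smul_mul]
  have hC1 : ∀ q : ℕ, tpow V q * tpow V.conjTranspose q = 1 := by
    intro q; rw [← tpow_mulC, hVV, tpow_one]
  ext S
  simp only [Set.mem_setOf_eq]
  constructor
  · rintro ⟨T, hT, rfl⟩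
    rw [FA5 k, FA5 l, tensorPowRect_eq_tpow, tensorPowRect_eq_tpow, tpow_conjT,
      Matrix.map_mul, Matrix.map_mul]
    rw [tensorPowSq_eq_tpow, tensorPowSq_eq_tpow] at hT
    have e2k := FA2 k
    have e2l := FA2 l
    have e3k := FA3 k
    have e3l := FA3 l
    have e4l := FA4 l
    have e4'k := FA4' k
    set Vk := (tpow V k).map (algebraMap ℂ A) with hVk
    set Vl := (tpow V l).map (algebraMap ℂ A) with hVl
    set Wk := (tpow V.conjTranspose k).map (algebraMap ℂ A) with hWk
    set Wl := (tpow V.conjTranspose l).map (algebraMap ℂ A) with hWl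
    set Pk := (tpow (V.conjTranspose * V) k).map (algebraMap ℂ A) with hPk
    set Pl := (tpow (V.conjTranspose * V) l).map (algebraMap ℂ A) with hPl
    set Uk := tpow u k with hUk
    set Ul := tpow u l with hUl
    set Tm := T.map (algebraMap ℂ A) with hTm
    have hL : Vl * Tm * Wk * (Vk * Uk * Wk) = Vl * (Ul * (Tm * Wk)) :=
      calc Vl * Tm * Wk * (Vk * Uk * Wk)
          = Vl * (Tm * ((Wk * Vk) * (Uk * Wk))) := by simp only [Matrix.mul_assoc]
        _ = Vl * (Tm * (Pk * (Uk * Wk))) := by rw [e2k]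
        _ = Vl * (Tm * ((Pk * Uk) * Wk)) := by simp only [Matrix.mul_assoc]
        _ = Vl * (Tm * ((Uk * Pk) * Wk)) := by rw [e3k]
        _ = Vl * ((Tm * Uk) * (Pk * Wk)) := by simp only [Matrix.mul_assoc]
        _ = Vl * ((Ul * Tm) * Wk) := by rw [hT, e4'k]
        _ = Vl * (Ul * (Tm * Wk)) := by simp only [Matrix.mul_assoc]
    have hR : Vl * Ul * Wl * (Vl * Tm * Wk) = Vl * (Ul * (Tm * Wk)) :=
      calc Vl * Ul * Wl * (Vl * Tm * Wk)
          = Vl * (Ul * ((Wl * Vl) * (Tm * Wk))) := by simp only [Matrix.mul_assoc]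
        _ = Vl * (Ul * (Pl * (Tm * Wk))) := by rw [e2l]
        _ = Vl * ((Ul * Pl) * (Tm * Wk)) := by simp only [Matrix.mul_assoc]
        _ = Vl * ((Pl * Ul) * (Tm * Wk)) := by rw [← e3l]
        _ = (Vl * Pl) * (Ul * (Tm * Wk)) := by simp only [Matrix.mul_assoc]
        _ = Vl * (Ul * (Tm * Wk)) := by rw [e4l]
    exact hL.trans hR.symm
  · intro hS
    rw [FA5 k, FA5 l] at hS
    refine ⟨tpow V.conjTranspose l * S * tpow V k, ?_, ?_⟩
    · rw [tensorPowSq_eq_tpow, tensorPowSq_eq_tpow, Matrix.map_mul, Matrix.map_mul]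
      have e2k := FA2 k
      have e2l := FA2 l
      have e3k := FA3 k
      have e3l := FA3 l
      have e4k := FA4 k
      have e4'l := FA4' l
      set Vk := (tpow V k).map (algebraMap ℂ A) with hVk
      set Vl := (tpow V l).map (algebraMap ℂ A) with hVl
      set Wk := (tpow V.conjTranspose k).map (algebraMap ℂ A) with hWk
      set Wl := (tpow V.conjTranspose l).map (algebraMap ℂ A) with hWl
      set Pk := (tpow (V.conjTranspose * V) k).map (algebraMap ℂ A) with hPk
      set Pl := (tpow (V.conjTranspose * V) l).map (algebraMap ℂ A) with hPl
      set Uk := tpow u k with hUk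
      set Ul := tpow u l with hUl
      set Sm := S.map (algebraMap ℂ A) with hSm
      calc Wl * Sm * Vk * Uk
          = Wl * Sm * ((Vk * Pk) * Uk) := by rw [e4k]; simp only [Matrix.mul_assoc]
        _ = Wl * Sm * (Vk * (Uk * Pk)) := by rw [← e3k]; simp only [Matrix.mul_assoc]
        _ = Wl * Sm * (Vk * (Uk * (Wk * Vk))) := by rw [e2k]
        _ = Wl * (Sm * (Vk * Uk * Wk)) * Vk := by simp only [Matrix.mul_assoc]
        _ = Wl * (Vl * Ul * Wl * Sm) * Vk := by rw [hS]
        _ = (Wl * Vl) * (Ul * (Wl * (Sm * Vk))) := by simp only [Matrix.mul_assoc]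
        _ = Pl * (Ul * (Wl * (Sm * Vk))) := by rw [e2l]
        _ = (Pl * Ul) * (Wl * (Sm * Vk)) := by simp only [Matrix.mul_assoc]
        _ = (Ul * Pl) * (Wl * (Sm * Vk)) := by rw [e3l]
        _ = Ul * ((Pl * Wl) * (Sm * Vk)) := by simp only [Matrix.mul_assoc]
        _ = Ul * (Wl * (Sm * Vk)) := by rw [e4'l]
        _ = Ul * (Wl * S.map (algebraMap ℂ A) * Vk) := by simp only [Matrix.mul_assoc, hSm]
    · rw [tensorPowRect_eq_tpow, tensorPowRect_eq_tpow, tpow_conjT]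
      have : tpow V l * (tpow V.conjTranspose l * S * tpow V k) * tpow V.conjTranspose k
          = (tpow V l * tpow V.conjTranspose l) * S * (tpow V k * tpow V.conjTranspose k) := by
        simp only [Matrix.mul_assoc]
      rw [this, hC1 l, hC1 k, Matrix.one_mul, Matrix.mul_one]
end

section
/- The linear map 𝒱 = 𝒱_{(N,±)} on linear combinations of partitions satisfies: for every partition p, 𝒱p = p + q where q is a linear combination of partitions each containing at least one singleton; consequently, the kernel of 𝒱 restricted to 𝒫_{N-lin}(k,l) equals the span of partitions in 𝒫(k,l) containing a singleton. -/
/-- The partition obtained from `p` by disconnecting the points of `S`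
(turning them into singletons). -/
def disconnect {n : ℕ} (p : Setoid (Fin n)) (S : Finset (Fin n)) : Setoid (Fin n) where
  r x y := x = y ∨ (x ∉ S ∧ y ∉ S ∧ p.r x y)
  iseqv := by
    constructor
    · intro x; exact Or.inl rfl
    · intro x y h
      rcases h with h | ⟨hx, hy, hr⟩
      · exact Or.inl h.symm
      · exact Or.inr ⟨hy, hx, p.iseqv.symm hr⟩
    · intro x y z hxy hyz
      rcases hxy with rfl | ⟨hx, hy, hr⟩
      · exact hyz
      · rcases hyz with rfl | ⟨hy', hz, hr'⟩
        · exact Or.inr ⟨hx, hy, hr⟩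
        · exact Or.inr ⟨hx, hz, p.iseqv.trans hr hr'⟩

/-- `p` contains a singleton block. -/
def hasSingleton {n : ℕ} (p : Setoid (Fin n)) : Prop :=
  ∃ x, ∀ y, p.r x y → y = x

open Classical in
/-- The block of the point `x` in the partition `p`. -/
noncomputable def blk {n : ℕ} (p : Setoid (Fin n)) (x : Fin n) : Finset (Fin n) :=
  Finset.univ.filter (fun y => p.r x y)

open Classical in
/-- The set of minimal representatives of the blocks of `p`. -/
noncomputable def reps {n : ℕ} (p : Setoid (Fin n)) : Finset (Fin n) :=
  Finset.univ.filter (fun x => ∀ y, p.r x y → x ≤ y)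

/-- The coefficient in `𝒱_{(N,±)}` of the partition obtained from a block of
size `k` by disconnecting `i` of its points: `(−(1/(N-1))(1 ± 1/√N))^i` for
`i < k`, while disconnecting a whole block (`i = k`, giving all singletons)
contributes `(N-1)·c^k + (±1/√N)^k`, accounting for the terms
`b_{k,k} = (N-1)·↑^{⊗k}` and `(±1/√N)^k ↑^{⊗k}` of Definition D.VK. -/
noncomputable def vWeight (N : ℕ) (ε : ℝ) (k i : ℕ) : ℂ :=
  if i = k then
    ((((N : ℝ) - 1) * (-(1 / ((N : ℝ) - 1)) * (1 + ε / Real.sqrt N)) ^ k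
      + (ε / Real.sqrt N) ^ k : ℝ) : ℂ)
  else (((-(1 / ((N : ℝ) - 1)) * (1 + ε / Real.sqrt N)) ^ i : ℝ) : ℂ)

/-- The coefficient of `disconnect p S` in `𝒱_{(N,±)} p`: a product over the
blocks of `p` of the weights determined by the block size and the number of
its points that get disconnected (the map `𝒱` acts blockwise). -/
noncomputable def vCoeff (N : ℕ) (ε : ℝ) {n : ℕ} (p : Setoid (Fin n))
    (S : Finset (Fin n)) : ℂ :=
  ∏ x ∈ reps p, vWeight N ε (blk p x).card ((blk p x) ∩ S).card

/-- The linear map `𝒱_{(N,±)} : 𝒫_{N-lin} → 𝒫_{(N-1)-lin}` on formal linear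
combinations of partitions of `n` points, defined blockwise as in
Definition D.VK. -/
noncomputable def Vmap (N : ℕ) (ε : ℝ) (n : ℕ) :
    (Setoid (Fin n) →₀ ℂ) →ₗ[ℂ] (Setoid (Fin n) →₀ ℂ) :=
  Finsupp.lsum ℂ (fun p => LinearMap.toSpanSingleton ℂ _
    (∑ S ∈ (Finset.univ : Finset (Fin n)).powerset,
      vCoeff N ε p S • Finsupp.single (disconnect p S) (1 : ℂ)))


section Aux
open Finset
variable {n : ℕ} {N : ℕ} {ε : ℝ}

lemma mem_blk {p : Setoid (Fin n)} {x y : Fin n} : y ∈ blk p x ↔ p.r x y := by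
  classical simp [blk]

lemma blk_card_ne_zero (p : Setoid (Fin n)) (x : Fin n) : (blk p x).card ≠ 0 := by
  have : x ∈ blk p x := mem_blk.2 (p.iseqv.refl x)
  exact Finset.card_ne_zero_of_mem this

lemma disconnect_empty (p : Setoid (Fin n)) : disconnect p ∅ = p := by
  apply Setoid.ext
  intro x y
  constructor
  · rintro (rfl | ⟨_, _, h⟩)
    · exact p.iseqv.refl x
    · exact h
  · intro h
    exact Or.inr ⟨Finset.notMem_empty x, Finset.notMem_empty y, h⟩

lemma vWeight_zero (hk : k ≠ 0) : vWeight N ε k 0 = 1 := by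
  simp [vWeight, (Ne.symm hk)]

lemma vCoeff_empty (p : Setoid (Fin n)) : vCoeff N ε p ∅ = 1 := by
  classical
  unfold vCoeff
  apply Finset.prod_eq_one
  intro x _
  simp [vWeight_zero (blk_card_ne_zero p x)]

lemma hasSingleton_disconnect (p : Setoid (Fin n)) {S : Finset (Fin n)} (hS : S.Nonempty) :
    hasSingleton (disconnect p S) := by
  obtain ⟨x, hx⟩ := hS
  refine ⟨x, fun y hy => ?_⟩
  rcases hy with h | ⟨hx', _, _⟩
  · exact h.symm
  · exact absurd hx hx'

end Aux

section Key
open Finset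
variable {n : ℕ} {N : ℕ} {ε : ℝ}

lemma vWeight_one_one (hN : 2 ≤ N) : vWeight N ε 1 1 = -1 := by
  have h1 : (N : ℝ) - 1 ≠ 0 := by
    have : (2:ℝ) ≤ (N:ℝ) := by exact_mod_cast hN
    nlinarith
  unfold vWeight
  rw [if_pos rfl]
  have : (((N : ℝ) - 1) * (-(1 / ((N : ℝ) - 1)) * (1 + ε / Real.sqrt N)) ^ 1
      + (ε / Real.sqrt N) ^ 1 : ℝ) = -1 := by
    field_simp
    ring
  rw [this]
  norm_num

lemma blk_singleton {p : Setoid (Fin n)} {x : Fin n} (hx : ∀ y, p.r x y → y = x) :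
    blk p x = {x} := by
  ext y
  simp only [mem_blk, Finset.mem_singleton]
  exact ⟨fun h => hx y h, fun h => h ▸ p.iseqv.refl x⟩

lemma mem_reps_of_singleton {p : Setoid (Fin n)} {x : Fin n} (hx : ∀ y, p.r x y → y = x) :
    x ∈ reps p := by
  classical
  simp only [reps, Finset.mem_filter, Finset.mem_univ, true_and]
  intro y hy
  exact (hx y hy) ▸ le_refl x

lemma not_mem_blk {p : Setoid (Fin n)} {x y : Fin n} (hx : ∀ z, p.r x z → z = x)
    (hyx : y ≠ x) : x ∉ blk p y := by
  intro h
  exact hyx (hx y (p.iseqv.symm (mem_blk.1 h)))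

lemma disconnect_insert {p : Setoid (Fin n)} {x : Fin n} (hx : ∀ y, p.r x y → y = x)
    (S : Finset (Fin n)) : disconnect p (insert x S) = disconnect p S := by
  apply Setoid.ext
  intro a b
  constructor
  · rintro (rfl | ⟨ha, hb, hr⟩)
    · exact Or.inl rfl
    · exact Or.inr ⟨fun h => ha (Finset.mem_insert_of_mem h),
        fun h => hb (Finset.mem_insert_of_mem h), hr⟩
  · rintro (rfl | ⟨ha, hb, hr⟩)
    · exact Or.inl rfl
    · by_cases hax : a = x
      · exact Or.inl (hax.trans (hx b (hax ▸ hr)).symm)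
      · by_cases hbx : b = x
        · exact Or.inl ((hx a (p.iseqv.symm (hbx ▸ hr))).trans hbx.symm)
        · exact Or.inr ⟨by simp [Finset.mem_insert, hax, ha],
            by simp [Finset.mem_insert, hbx, hb], hr⟩

lemma vCoeff_insert (hN : 2 ≤ N) {p : Setoid (Fin n)} {x : Fin n}
    (hx : ∀ y, p.r x y → y = x) {S : Finset (Fin n)} (hxS : x ∉ S) :
    vCoeff N ε p (insert x S) = - vCoeff N ε p S := by
  classical
  unfold vCoeff
  have hxr := mem_reps_of_singleton hx
  rw [← Finset.mul_prod_erase _ _ hxr, ← Finset.mul_prod_erase _ _ hxr]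
  have hblk : blk p x = {x} := blk_singleton hx
  have h1 : ({x} : Finset (Fin n)) ∩ insert x S = {x} := by
    ext y; simp (config := {contextual := true}) [Finset.mem_inter]
  have h2 : ({x} : Finset (Fin n)) ∩ S = ∅ := by
    ext y; simp (config := {contextual := true}) [Finset.mem_inter]
    rintro rfl; exact hxS
  have hrest : ∀ y ∈ (reps p).erase x,
      vWeight N ε (blk p y).card ((blk p y) ∩ insert x S).card
        = vWeight N ε (blk p y).card ((blk p y) ∩ S).card := by
    intro y hy
    have hyx : y ≠ x := Finset.ne_of_mem_erase hy
    have : (blk p y) ∩ insert x S = (blk p y) ∩ S := by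
      ext z
      simp only [Finset.mem_inter, Finset.mem_insert]
      constructor
      · rintro ⟨hz, rfl | hz'⟩
        · exact absurd hz (not_mem_blk hx hyx)
        · exact ⟨hz, hz'⟩
      · rintro ⟨hz, hz'⟩; exact ⟨hz, Or.inr hz'⟩
    rw [this]
  rw [Finset.prod_congr rfl hrest, hblk, h1, h2]
  simp [vWeight_one_one hN, vWeight_zero (k := 1) one_ne_zero]

end Key

section Main
open Finset
variable {n : ℕ} {N : ℕ} {ε : ℝ}

lemma Vmap_single (N : ℕ) (ε : ℝ) (n : ℕ) (p : Setoid (Fin n)) :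
    Vmap N ε n (Finsupp.single p 1) =
      ∑ S ∈ (Finset.univ : Finset (Fin n)).powerset,
        vCoeff N ε p S • Finsupp.single (disconnect p S) (1 : ℂ) := by
  simp [Vmap, Finsupp.lsum_single, LinearMap.toSpanSingleton_apply]

lemma sum_zero_of_singleton (hN : 2 ≤ N) {p : Setoid (Fin n)} (hp : hasSingleton p) :
    ∑ S ∈ (Finset.univ : Finset (Fin n)).powerset,
      vCoeff N ε p S • Finsupp.single (disconnect p S) (1 : ℂ) = 0 := by
  classical
  obtain ⟨x, hx⟩ := hp
  have hxe : x ∉ Finset.univ.erase x := Finset.notMem_erase x _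
  have huniv : (Finset.univ : Finset (Fin n)) = insert x (Finset.univ.erase x) :=
    (Finset.insert_erase (Finset.mem_univ x)).symm
  rw [huniv, Finset.sum_powerset_insert hxe]
  rw [← Finset.sum_add_distrib]
  apply Finset.sum_eq_zero
  intro S hS
  have hxS : x ∉ S := fun h => hxe (Finset.mem_powerset.1 hS h)
  rw [disconnect_insert hx, vCoeff_insert hN hx hxS, neg_smul, add_neg_cancel]

end Main

section Main2
open Finset
variable {n : ℕ} {N : ℕ} {ε : ℝ}

/-- The `q` part of `𝒱 p`. -/
noncomputable def qpart (N : ℕ) (ε : ℝ) {n : ℕ} (p : Setoid (Fin n)) :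
    Setoid (Fin n) →₀ ℂ :=
  ∑ S ∈ ((Finset.univ : Finset (Fin n)).powerset).erase ∅,
    vCoeff N ε p S • Finsupp.single (disconnect p S) (1 : ℂ)

lemma qpart_support {p : Setoid (Fin n)} :
    ∀ r ∈ (qpart N ε p).support, hasSingleton r := by
  classical
  intro r hr
  have := Finsupp.support_finset_sum (s := ((Finset.univ : Finset (Fin n)).powerset).erase ∅)
    (f := fun S => vCoeff N ε p S • Finsupp.single (disconnect p S) (1 : ℂ)) hr
  obtain ⟨S, hS, hrS⟩ := Finset.mem_biUnion.1 this
  have hSne : S ≠ ∅ := Finset.ne_of_mem_erase hS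
  have := Finsupp.support_smul hrS
  have hr' : r = disconnect p S := by
    have := Finsupp.support_single_subset this
    simpa using this
  exact hr' ▸ hasSingleton_disconnect p (Finset.nonempty_of_ne_empty hSne)

lemma Vmap_single_eq (p : Setoid (Fin n)) :
    Vmap N ε n (Finsupp.single p 1) = Finsupp.single p 1 + qpart N ε p := by
  classical
  rw [Vmap_single, qpart]
  rw [← Finset.add_sum_erase _ _ (Finset.mem_powerset.2 (Finset.empty_subset _))]
  rw [vCoeff_empty, disconnect_empty, one_smul]

lemma mem_span_of_support (q : Setoid (Fin n) →₀ ℂ)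
    (h : ∀ r ∈ q.support, hasSingleton r) :
    q ∈ Submodule.span ℂ {f : Setoid (Fin n) →₀ ℂ |
      ∃ p : Setoid (Fin n), hasSingleton p ∧ f = Finsupp.single p 1} := by
  classical
  rw [← Finsupp.sum_single q]
  apply Submodule.finsuppSum_mem
  intro r hr0
  have hr : r ∈ q.support := Finsupp.mem_support_iff.2 hr0
  have : Finsupp.single r (q r) = q r • Finsupp.single r (1 : ℂ) := by
    rw [Finsupp.smul_single, smul_eq_mul, mul_one]
  rw [this]
  exact Submodule.smul_mem _ _ (Submodule.subset_span ⟨r, h r hr, rfl⟩)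

end Main2
/-- (1) For every partition `p`, `𝒱_{(N,±)} p = p + q` where `q`
is a linear combination of partitions each containing a singleton;
(2) consequently the kernel of `𝒱_{(N,±)}` equals the span of the partitions
containing a singleton. -/
theorem stmt19 (N n : ℕ) (hN : 2 ≤ N) (ε : ℝ) (hε : ε = 1 ∨ ε = -1) :
    (∀ p : Setoid (Fin n), ∃ q : Setoid (Fin n) →₀ ℂ,
      (∀ r ∈ q.support, hasSingleton r) ∧
      Vmap N ε n (Finsupp.single p 1) = Finsupp.single p 1 + q) ∧
    LinearMap.ker (Vmap N ε n) =
      Submodule.span ℂ {f : Setoid (Fin n) →₀ ℂ |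
        ∃ p : Setoid (Fin n), hasSingleton p ∧ f = Finsupp.single p 1} := by
  classical
  constructor
  · intro p
    exact ⟨qpart N ε p, qpart_support, Vmap_single_eq p⟩
  · apply le_antisymm
    · intro f hf
      have key : ∀ g : Setoid (Fin n) →₀ ℂ,
          Vmap N ε n g - g ∈ Submodule.span ℂ {f : Setoid (Fin n) →₀ ℂ |
            ∃ p : Setoid (Fin n), hasSingleton p ∧ f = Finsupp.single p 1} := by
        intro g
        induction g using Finsupp.induction_linear with
        | zero => simp
        | add a b ha hb =>
            have h : Vmap N ε n (a + b) - (a + b)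
                = (Vmap N ε n a - a) + (Vmap N ε n b - b) := by
              rw [map_add]; abel
            rw [h]; exact Submodule.add_mem _ ha hb
        | single p c =>
            have h1 : Finsupp.single p c = c • Finsupp.single p (1 : ℂ) := by
              rw [Finsupp.smul_single, smul_eq_mul, mul_one]
            rw [h1, map_smul, ← smul_sub, Vmap_single_eq]
            have h2 : Finsupp.single p (1:ℂ) + qpart N ε p - Finsupp.single p 1
                = qpart N ε p := by abel
            rw [h2]
            exact Submodule.smul_mem _ _ (mem_span_of_support _ qpart_support)
      have hf0 : Vmap N ε n f = 0 := hf
      have h := key f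
      rw [hf0, zero_sub] at h
      simpa using Submodule.neg_mem _ h
    · rw [Submodule.span_le]
      rintro f ⟨p, hp, rfl⟩
      simp only [SetLike.mem_coe, LinearMap.mem_ker]
      rw [Vmap_single, sum_zero_of_singleton hN hp]
end
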